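/- For fixed p, q ∈ [0,1], the function δ ↦ d(p∗δ ‖ q∗δ), where d(a‖b) = a·ln(a/b) + (1−a)·ln((1−a)/(1−b)) is the binary KL divergence and a∗b = a(1−b) + (1−a)b is binary convolution, is convex as a function of x = (1−2δ)² for δ ∈ [0,1/2]. -/
import Mathlib


/-- Binary convolution: `a ∗ b = a(1-b) + (1-a)b`. -/
noncomputable def bconv (a b : ℝ) : ℝ := a * (1 - b) + (1 - a) * b

/-- Binary KL divergence `d(a‖b) = a ln(a/b) + (1-a) ln((1-a)/(1-b))`. -/
noncomputable def bkl (a b : ℝ) : ℝ :=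
  a * Real.log (a / b) + (1 - a) * Real.log ((1 - a) / (1 - b))

open Real


lemma even_pow_nonneg' (a : ℝ) (k : ℕ) : 0 ≤ a ^ (2*k+2) := by
  rw [show 2*k+2 = (k+1)*2 from by ring, pow_mul]
  positivity

/-- Tangent-line inequality for even powers. -/
lemma key_ineq (k : ℕ) (a b : ℝ) :
    0 ≤ a ^ (2*k+2) - (2*(k:ℝ)+2) * a * b ^ (2*k+1) + (2*(k:ℝ)+1) * b ^ (2*k+2) := by
  have hk0 : (0:ℝ) ≤ 2*(k:ℝ)+2 := by positivity
  rcases le_or_gt (a * b ^ (2*k+1)) 0 with h | h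
  · have h1 : (2*(k:ℝ)+2) * (a * b ^ (2*k+1)) ≤ 0 := mul_nonpos_of_nonneg_of_nonpos hk0 h
    have h2 := even_pow_nonneg' a k
    have h3 := even_pow_nonneg' b k
    nlinarith
  · have hb : b ≠ 0 := by
      rintro rfl
      simp at h
    have hbpow : (0:ℝ) < b ^ (2*k+2) :=
      lt_of_le_of_ne (even_pow_nonneg' b k) (Ne.symm (pow_ne_zero _ hb))
    have hab : 0 < a * b := by
      by_contra hc
      push_neg at hc
      have h2 : (0:ℝ) ≤ b ^ (2*k) := by
        rw [show 2*k = k*2 from by ring, pow_mul]; positivity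
      have h4 : (a*b) * b ^ (2*k) ≤ 0 := mul_nonpos_of_nonpos_of_nonneg hc h2
      have he : (a*b) * b ^ (2*k) = a * b ^ (2*k+1) := by ring
      linarith [he ▸ h4]
    have ht : -2 ≤ a / b - 1 := by
      have hbq : 0 < a / b := div_pos_iff.mpr (by
        rcases mul_pos_iff.mp hab with ⟨h1,h2⟩|⟨h1,h2⟩
        · exact Or.inl ⟨h1,h2⟩
        · exact Or.inr ⟨h1,h2⟩)
      linarith
    have H := one_add_mul_le_pow ht (2*k+2)
    have h1 : (1 + (a/b - 1)) ^ (2*k+2) = a ^ (2*k+2) / b ^ (2*k+2) := by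
      rw [show 1 + (a/b-1) = a/b from by ring, div_pow]
    rw [h1] at H
    have H2 := mul_le_mul_of_nonneg_right H hbpow.le
    rw [div_mul_cancel₀ _ hbpow.ne'] at H2
    have hab2 : (a / b) * b ^ (2*k+2) = a * b ^ (2*k+1) := by
      field_simp
      ring
    push_cast at H2
    nlinarith [H2, hab2]

lemma hasSum_oddLog {r : ℝ} (hr : |r| < 1) :
    HasSum (fun j : ℕ => r ^ (2*j+1) / (2*(j:ℝ)+1))
      ((Real.log (1+r) - Real.log (1-r)) / 2) := by
  have h1 := Real.hasSum_pow_div_log_of_abs_lt_one hr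
  have h2 := Real.hasSum_pow_div_log_of_abs_lt_one (x := -r) (by rwa [abs_neg])
  have h3 := (h1.sub h2).div_const 2
  rw [show (1 : ℝ) - -r = 1 + r from by ring] at h3
  rw [show -Real.log (1-r) - -Real.log (1+r) = Real.log (1+r) - Real.log (1-r) from by ring]
    at h3
  have hinj : Function.Injective (fun j : ℕ => 2*j) := fun x y h => by
    simp only at h; omega
  have hzero : ∀ n ∉ Set.range (fun j : ℕ => 2*j),
      (r ^ (n+1) / ((n:ℝ)+1) - (-r) ^ (n+1) / ((n:ℝ)+1)) / 2 = 0 := by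
    intro n hn
    have hodd : Odd n := by
      rcases Nat.even_or_odd n with he | ho
      · obtain ⟨m, hm⟩ := he
        exact absurd ⟨m, show 2*m = n by omega⟩ hn
      · exact ho
    have he : Even (n+1) := Odd.add_one hodd
    rw [he.neg_pow]
    ring
  have h4 := (hinj.hasSum_iff hzero).mpr h3
  refine h4.congr_fun fun j => ?_
  simp only [Function.comp]
  have ho : Odd (2*j+1) := ⟨j, by omega⟩
  rw [ho.neg_pow]
  push_cast
  ring


/-- The series coefficients. -/
noncomputable def klCoef (p q : ℝ) (j : ℕ) : ℝ :=
  ((2*p-1)^(2*j+2) - (2*(j:ℝ)+2)*(2*p-1)*(2*q-1)^(2*j+1) + (2*(j:ℝ)+1)*(2*q-1)^(2*j+2))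
    / ((2*(j:ℝ)+1)*(2*(j:ℝ)+2))

lemma klCoef_nonneg (p q : ℝ) (j : ℕ) : 0 ≤ klCoef p q j :=
  div_nonneg (key_ineq j (2*p-1) (2*q-1)) (by positivity)

lemma abs_lt_one (p : ℝ) (hp : p ∈ Set.Ioo (0:ℝ) 1) : |2*p-1| < 1 :=
  abs_lt.mpr ⟨by linarith [hp.1], by linarith [hp.2]⟩

lemma main_hasSum (p q x : ℝ) (hp : p ∈ Set.Ioo (0:ℝ) 1) (hq : q ∈ Set.Ioo (0:ℝ) 1)
    (hx : x ∈ Set.Ioc (0:ℝ) 1) :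
    HasSum (fun j : ℕ => klCoef p q j * x^(j+1))
      (bkl (bconv p ((1 - Real.sqrt x) / 2)) (bconv q ((1 - Real.sqrt x) / 2))) := by
  set s := Real.sqrt x with hs
  have hs0 : 0 < s := Real.sqrt_pos.mpr hx.1
  have hs1 : s ≤ 1 := by rw [hs, show (1:ℝ) = Real.sqrt 1 from (Real.sqrt_one).symm]; exact Real.sqrt_le_sqrt hx.2
  have hsx : s^2 = x := Real.sq_sqrt hx.1.le
  have ha := abs_lt_one p hp
  have hb := abs_lt_one q hq
  have has : |(2*p-1)*s| < 1 := by
    rw [abs_mul, abs_of_pos hs0]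
    calc |2*p-1| * s ≤ |2*p-1| * 1 := by
          exact mul_le_mul_of_nonneg_left hs1 (abs_nonneg _)
      _ < 1 := by rwa [mul_one]
  have hbs : |(2*q-1)*s| < 1 := by
    rw [abs_mul, abs_of_pos hs0]
    calc |2*q-1| * s ≤ |2*q-1| * 1 := by
          exact mul_le_mul_of_nonneg_left hs1 (abs_nonneg _)
      _ < 1 := by rwa [mul_one]
  have hsq1 : (2*p-1)^2 < 1 := by nlinarith [abs_lt.mp ha]
  have hsq2 : (2*q-1)^2 < 1 := by nlinarith [abs_lt.mp hb]
  have hax : |(2*p-1)^2 * x| < 1 := by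
    rw [abs_of_nonneg (mul_nonneg (sq_nonneg _) hx.1.le)]
    nlinarith [mul_le_mul_of_nonneg_left hx.2 (sq_nonneg (2*p-1))]
  have hbx : |(2*q-1)^2 * x| < 1 := by
    rw [abs_of_nonneg (mul_nonneg (sq_nonneg _) hx.1.le)]
    nlinarith [mul_le_mul_of_nonneg_left hx.2 (sq_nonneg (2*q-1))]
  have O1 := hasSum_oddLog has
  have O2 := hasSum_oddLog hbs
  have E1 := Real.hasSum_pow_div_log_of_abs_lt_one hax
  have E2 := Real.hasSum_pow_div_log_of_abs_lt_one hbx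
  have C := ((O1.sub O2).mul_left ((2*p-1)*s)).add ((E1.sub E2).mul_left (-(1/2)))
  -- positivity of the log arguments
  have h1 : 0 < 1 + (2*p-1)*s := by have := abs_lt.mp has; linarith [this.1]
  have h2 : 0 < 1 - (2*p-1)*s := by have := abs_lt.mp has; linarith [this.2]
  have h3 : 0 < 1 + (2*q-1)*s := by have := abs_lt.mp hbs; linarith [this.1]
  have h4 : 0 < 1 - (2*q-1)*s := by have := abs_lt.mp hbs; linarith [this.2]
  have hfun : ∀ j : ℕ, klCoef p q j * x^(j+1)
      = (2*p-1)*s * (((2*p-1)*s) ^ (2*j+1) / (2*(j:ℝ)+1)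
          - ((2*q-1)*s) ^ (2*j+1) / (2*(j:ℝ)+1))
        + (-(1/2)) * (((2*p-1)^2*x) ^ (j+1) / ((j:ℝ)+1)
          - ((2*q-1)^2*x) ^ (j+1) / ((j:ℝ)+1)) := by
    intro j
    rw [← hsx]
    unfold klCoef
    have e1 : ∀ t : ℝ, (t^2*s^2)^(j+1) = t^(2*j+1) * t * (s^(2*j+1) * s) := by
      intro t
      rw [← mul_pow, ← pow_mul, show 2*(j+1) = (2*j+1)+1 from by ring, pow_succ, mul_pow]
      ring
    have e2 : ((s:ℝ)^2)^(j+1) = s^(2*j+1) * s := by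
      rw [← pow_mul, show 2*(j+1) = (2*j+1)+1 from by ring, pow_succ]
    have e3 : ∀ t : ℝ, t^(2*j+2) = t^(2*j+1) * t := fun t => by
      rw [show 2*j+2 = (2*j+1)+1 from by ring, pow_succ]
    rw [e1 (2*p-1), e1 (2*q-1), e2, e3 (2*p-1), e3 (2*q-1),
      mul_pow (2*p-1) s (2*j+1), mul_pow (2*q-1) s (2*j+1)]
    have d1 : (2*(j:ℝ)+1) ≠ 0 := by positivity
    have d2 : (2*(j:ℝ)+2) ≠ 0 := by positivity
    have d3 : ((j:ℝ)+1) ≠ 0 := by positivity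
    field_simp
    ring
  have hval : bkl (bconv p ((1 - s) / 2)) (bconv q ((1 - s) / 2))
      = (2*p-1)*s * ((Real.log (1 + (2*p-1)*s) - Real.log (1 - (2*p-1)*s)) / 2
          - (Real.log (1 + (2*q-1)*s) - Real.log (1 - (2*q-1)*s)) / 2)
        + (-(1/2)) * (-Real.log (1 - (2*p-1)^2*x) - -Real.log (1 - (2*q-1)^2*x)) := by
    have hu : bconv p ((1 - s) / 2) = (1 + (2*p-1)*s)/2 := by unfold bconv; ring
    have hv : bconv q ((1 - s) / 2) = (1 + (2*q-1)*s)/2 := by unfold bconv; ring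
    unfold bkl
    rw [hu, hv]
    rw [show (1:ℝ) - (1 + (2*p-1)*s)/2 = (1 - (2*p-1)*s)/2 from by ring]
    rw [show (1:ℝ) - (1 + (2*q-1)*s)/2 = (1 - (2*q-1)*s)/2 from by ring]
    rw [show (1 + (2*p-1)*s)/2 / ((1 + (2*q-1)*s)/2) = (1 + (2*p-1)*s) / (1 + (2*q-1)*s)
        from by field_simp]
    rw [show (1 - (2*p-1)*s)/2 / ((1 - (2*q-1)*s)/2) = (1 - (2*p-1)*s) / (1 - (2*q-1)*s)
        from by field_simp]
    rw [Real.log_div h1.ne' h3.ne', Real.log_div h2.ne' h4.ne']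
    rw [show 1 - (2*p-1)^2*x = (1 - (2*p-1)*s) * (1 + (2*p-1)*s) from by rw [← hsx]; ring]
    rw [show 1 - (2*q-1)^2*x = (1 - (2*q-1)*s) * (1 + (2*q-1)*s) from by rw [← hsx]; ring]
    rw [Real.log_mul h2.ne' h1.ne', Real.log_mul h4.ne' h3.ne']
    ring
  rw [hval]
  exact C.congr_fun hfun

/-- For fixed `p, q ∈ (0,1)`, the function `x ↦ d(p∗δ(x) ‖ q∗δ(x))`, where
`δ(x) = (1 - √x)/2`, is convex on `(0,1]` (convexity in `x = (1-2δ)²`). -/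
theorem binary_kl_convex_in_chi_sq_param (p q : ℝ)
    (hp : p ∈ Set.Ioo (0:ℝ) 1) (hq : q ∈ Set.Ioo (0:ℝ) 1) :
    ConvexOn ℝ (Set.Ioc (0:ℝ) 1)
      (fun x => bkl (bconv p ((1 - Real.sqrt x) / 2)) (bconv q ((1 - Real.sqrt x) / 2))) := by
  refine ⟨convex_Ioc 0 1, ?_⟩
  intro x hx y hy α β hα hβ hαβ
  have hz : α • x + β • y ∈ Set.Ioc (0:ℝ) 1 := (convex_Ioc (0:ℝ) 1) hx hy hα hβ hαβ
  have HX := main_hasSum p q x hp hq hx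
  have HY := main_hasSum p q y hp hq hy
  have HZ := main_hasSum p q (α • x + β • y) hp hq hz
  have HR := (HX.mul_left α).add (HY.mul_left β)
  simp only [smul_eq_mul] at *
  rw [← HZ.tsum_eq, ← HR.tsum_eq]
  refine Summable.tsum_le_tsum ?_ HZ.summable HR.summable
  intro j
  have hcoef := klCoef_nonneg p q j
  have hpow : (α * x + β * y) ^ (j+1) ≤ α * x ^ (j+1) + β * y ^ (j+1) := by
    have := (convexOn_pow (j+1)).2 (Set.mem_Ici.mpr hx.1.le) (Set.mem_Ici.mpr hy.1.le)
      hα hβ hαβ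
    simpa using this
  calc klCoef p q j * (α * x + β * y) ^ (j+1)
      ≤ klCoef p q j * (α * x ^ (j+1) + β * y ^ (j+1)) :=
        mul_le_mul_of_nonneg_left hpow hcoef
    _ = α * (klCoef p q j * x ^ (j+1)) + β * (klCoef p q j * y ^ (j+1)) := by ring
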